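/- For a random vector x in R^d with covariance second-moment matrix Sigma = E[x x^T], if x_1,...,x_k are i.i.d. copies of x forming the rows of matrix X in R^{k x d}, then E[det(X^T X)] = d! * binom(k,d) * det(Sigma). -/

import Mathlib

open MeasureTheory Matrix

section Aux

variable {E : Type*} [MeasurableSpace E] {ι : Type*} [Fintype ι]

/-- Fubini for a product of one-coordinate functions over a general `Measure.pi`. -/
theorem aux_integral_pi_prod (μ : Measure E) [SigmaFinite μ] (f : ι → E → ℝ) :
    ∫ x : ι → E, ∏ i, f i (x i) ∂(Measure.pi fun _ => μ) = ∏ i, ∫ x, f i x ∂μ := by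
  letI : MeasureSpace E := ⟨μ⟩
  exact MeasureTheory.integral_fintype_prod_eq_prod f

theorem aux_integrable_pi_prod (μ : Measure E) [SigmaFinite μ] {f : ι → E → ℝ}
    (hf : ∀ i, Integrable (f i) μ) :
    Integrable (fun x : ι → E => ∏ i, f i (x i)) (Measure.pi fun _ => μ) := by
  letI : MeasureSpace E := ⟨μ⟩
  exact MeasureTheory.Integrable.fintype_prod hf

end Aux

/-- Expected determinant of `XᵀX` for a matrix with i.i.d. rows equals
`d! * C(k,d) * det Σ` where `Σ = E[x xᵀ]`. -/
theorem stmt1 (d k : ℕ) (hd : 0 < d) (hdk : d ≤ k)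
    (μ : Measure (Fin d → ℝ)) [IsProbabilityMeasure μ]
    (hint : ∀ i j : Fin d, Integrable (fun x => x i * x j) μ) :
    ∫ w : Fin k → (Fin d → ℝ),
        ((Matrix.of w)ᵀ * Matrix.of w).det ∂(Measure.pi fun _ => μ)
    = (Nat.factorial d : ℝ) * (Nat.choose k d : ℝ) *
        (Matrix.of fun i j => ∫ x, x i * x j ∂μ).det := by
  classical
  set π : Measure (Fin k → (Fin d → ℝ)) := Measure.pi fun _ => μ with hπ
  -- the summand
  set F : (Fin d → Fin k) → (Fin k → (Fin d → ℝ)) → ℝ :=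
    fun r w => (∏ i, w (r i) i) * (Matrix.of fun i j => w (r i) j).det with hF
  -- Step 1 : pointwise expansion by multilinearity in the rows
  have step1 : ∀ w : Fin k → (Fin d → ℝ),
      ((Matrix.of w)ᵀ * Matrix.of w).det = ∑ r : Fin d → Fin k, F r w := by
    intro w
    have hM : ((Matrix.of w)ᵀ * Matrix.of w) = Matrix.of fun i => ∑ m, (w m i) • (w m) := by
      ext i j
      simp [Matrix.mul_apply, Finset.sum_apply, smul_eq_mul]
    rw [hM]
    calc (Matrix.of fun i => ∑ m, (w m i) • (w m)).det
        = ∑ r : Fin d → Fin k,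
            (Matrix.detRowAlternating : (Fin d → ℝ) [⋀^Fin d]→ₗ[ℝ] ℝ).toMultilinearMap
              (fun i => (w (r i) i) • (w (r i))) := by
          exact (Matrix.detRowAlternating :
            (Fin d → ℝ) [⋀^Fin d]→ₗ[ℝ] ℝ).toMultilinearMap.map_sum
              (g := fun i m => (w m i) • (w m))
      _ = ∑ r : Fin d → Fin k, F r w := by
          refine Finset.sum_congr rfl fun r _ => ?_
          rw [MultilinearMap.map_smul_univ, smul_eq_mul]
          rfl
  -- Step 2 : non-injective terms vanish identically
  have step2 : ∀ r : Fin d → Fin k, ¬ Function.Injective r → F r = 0 := by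
    intro r hr
    funext w
    obtain ⟨i, j, hij, hne⟩ : ∃ i j, r i = r j ∧ i ≠ j := by
      simp only [Function.Injective, not_forall] at hr
      obtain ⟨i, j, h1, h2⟩ := hr
      exact ⟨i, j, h1, h2⟩
    have : (Matrix.of fun i j => w (r i) j).det = 0 :=
      Matrix.det_zero_of_row_eq hne (by ext x; simp [hij])
    simp [hF, this]
  -- Step 3 : for injective `r`, pointwise expansion of `F r`
  have step3 : ∀ r : Fin d → Fin k, Function.Injective r → ∀ w,
      F r w = ∑ σ : Equiv.Perm (Fin d),
        (Equiv.Perm.sign σ : ℤ) * ∏ i, (w (r i) i * w (r i) (σ i)) := by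
    intro r hr w
    rw [hF]
    simp only
    rw [← Matrix.det_transpose, Matrix.det_apply']
    rw [Finset.mul_sum]
    refine Finset.sum_congr rfl fun σ _ => ?_
    simp only [Matrix.transpose_apply, Matrix.of_apply]
    rw [Finset.prod_mul_distrib]
    ring
  -- integrability and value of each (injective r, σ) term
  have key : ∀ r : Fin d → Fin k, Function.Injective r → ∀ σ : Equiv.Perm (Fin d),
      Integrable (fun w : Fin k → (Fin d → ℝ) => ∏ i, (w (r i) i * w (r i) (σ i))) π ∧
      ∫ w, (∏ i, (w (r i) i * w (r i) (σ i))) ∂π = ∏ i, ∫ x, x i * x (σ i) ∂μ := by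
    intro r hr σ
    set g : Fin d → (Fin d → ℝ) → ℝ := fun i x => x i * x (σ i) with hg
    set h : Fin k → (Fin d → ℝ) → ℝ := Function.extend r g (fun _ _ => (1:ℝ)) with hh
    have hre : ∀ w : Fin k → (Fin d → ℝ),
        (∏ i, (w (r i) i * w (r i) (σ i))) = ∏ m, h m (w m) := by
      intro w
      have h1 : ∏ m, h m (w m) = ∏ m ∈ Finset.univ.image r, h m (w m) := by
        refine (Finset.prod_subset (Finset.subset_univ _) fun m _ hm => ?_).symm
        have : ¬∃ i, r i = m := by
          rintro ⟨i, rfl⟩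
          exact hm (Finset.mem_image_of_mem r (Finset.mem_univ i))
        rw [hh, Function.extend_apply' _ _ _ this]
      rw [h1, Finset.prod_image (fun i _ j _ hij => hr hij)]
      refine Finset.prod_congr rfl fun i _ => ?_
      rw [hh, hr.extend_apply]
    have hint' : ∀ m, Integrable (h m) μ := by
      intro m
      by_cases hm : ∃ i, r i = m
      · obtain ⟨i, rfl⟩ := hm
        rw [hh, hr.extend_apply]
        exact hint i (σ i)
      · have : h m = fun _ => (1:ℝ) := by
          funext x; rw [hh, Function.extend_apply' _ _ _ hm]
        rw [this]
        exact integrable_const 1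
    constructor
    · have := aux_integrable_pi_prod μ hint'
      refine this.congr ?_
      exact Filter.Eventually.of_forall fun w => (hre w).symm
    · calc ∫ w, (∏ i, (w (r i) i * w (r i) (σ i))) ∂π
          = ∫ w, ∏ m, h m (w m) ∂π := by
            exact integral_congr_ae (Filter.Eventually.of_forall fun w => hre w)
        _ = ∏ m, ∫ x, h m x ∂μ := aux_integral_pi_prod μ h
        _ = ∏ i, ∫ x, x i * x (σ i) ∂μ := by
            have h1 : ∏ m, ∫ x, h m x ∂μ = ∏ m ∈ Finset.univ.image r, ∫ x, h m x ∂μ := by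
              refine (Finset.prod_subset (Finset.subset_univ _) fun m _ hm => ?_).symm
              have hnm : ¬∃ i, r i = m := by
                rintro ⟨i, rfl⟩
                exact hm (Finset.mem_image_of_mem r (Finset.mem_univ i))
              have : h m = fun _ => (1:ℝ) := by
                funext x; rw [hh, Function.extend_apply' _ _ _ hnm]
              simp [this]
            rw [h1, Finset.prod_image (fun i _ j _ hij => hr hij)]
            refine Finset.prod_congr rfl fun i _ => ?_
            rw [hh, hr.extend_apply]
  -- integrability of each F r
  have hFint : ∀ r : Fin d → Fin k, Integrable (F r) π := by
    intro r
    by_cases hr : Function.Injective r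
    · have : F r = fun w => ∑ σ : Equiv.Perm (Fin d),
          ((Equiv.Perm.sign σ : ℤ) : ℝ) * ∏ i, (w (r i) i * w (r i) (σ i)) := by
        funext w; exact step3 r hr w
      rw [this]
      exact integrable_finset_sum _ fun σ _ => ((key r hr σ).1).const_mul _
    · rw [step2 r hr]
      exact integrable_zero _ _ _
  -- value of ∫ F r for injective r
  have hFval : ∀ r : Fin d → Fin k, Function.Injective r →
      ∫ w, F r w ∂π = (Matrix.of fun i j => ∫ x, x i * x j ∂μ).det := by
    intro r hr
    have h1 : ∫ w, F r w ∂π = ∑ σ : Equiv.Perm (Fin d),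
        ((Equiv.Perm.sign σ : ℤ) : ℝ) * ∏ i, ∫ x, x i * x (σ i) ∂μ := by
      calc ∫ w, F r w ∂π
          = ∫ w, ∑ σ : Equiv.Perm (Fin d),
              ((Equiv.Perm.sign σ : ℤ) : ℝ) * ∏ i, (w (r i) i * w (r i) (σ i)) ∂π :=
            integral_congr_ae (Filter.Eventually.of_forall fun w => step3 r hr w)
        _ = ∑ σ : Equiv.Perm (Fin d),
              ∫ w, ((Equiv.Perm.sign σ : ℤ) : ℝ) * ∏ i, (w (r i) i * w (r i) (σ i)) ∂π :=
            integral_finset_sum _ fun σ _ => ((key r hr σ).1).const_mul _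
        _ = _ := by
            refine Finset.sum_congr rfl fun σ _ => ?_
            rw [integral_const_mul, (key r hr σ).2]
    rw [h1, ← Matrix.det_transpose, Matrix.det_apply']
    refine Finset.sum_congr rfl fun σ _ => ?_
    simp [Matrix.transpose_apply]
  -- count injective maps
  have hcard : (Finset.univ.filter (fun r : Fin d → Fin k => Function.Injective r)).card
      = d.factorial * k.choose d := by
    rw [← Fintype.card_subtype]
    rw [Fintype.card_congr (Equiv.subtypeInjectiveEquivEmbedding (Fin d) (Fin k))]
    rw [Fintype.card_embedding_eq]
    simp [Nat.descFactorial_eq_factorial_mul_choose]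
  -- put everything together
  calc ∫ w, ((Matrix.of w)ᵀ * Matrix.of w).det ∂π
      = ∫ w, ∑ r : Fin d → Fin k, F r w ∂π :=
        integral_congr_ae (Filter.Eventually.of_forall step1)
    _ = ∑ r : Fin d → Fin k, ∫ w, F r w ∂π := integral_finset_sum _ fun r _ => hFint r
    _ = ∑ r : Fin d → Fin k, if Function.Injective r
          then (Matrix.of fun i j => ∫ x, x i * x j ∂μ).det else 0 := by
        refine Finset.sum_congr rfl fun r _ => ?_
        by_cases hr : Function.Injective r
        · rw [if_pos hr, hFval r hr]
        · rw [if_neg hr, step2 r hr]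
          simp
    _ = (Nat.factorial d : ℝ) * (Nat.choose k d : ℝ) *
        (Matrix.of fun i j => ∫ x, x i * x j ∂μ).det := by
        rw [← Finset.sum_filter, Finset.sum_const, hcard]
        push_cast
        ring
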